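/- Fix Γ > 0. For β, δ > 0 let u_β(Δ) = √((1/π)β/(β²/4 + Δ²)) and define the vector v(β, δ) = (a₊, b, b, a₋) ∈ ℂ⁴, where a± = u_β(0)/(Γ/2 ± 2iδ) and b = u_β(2δ)/(Γ/2). Then lim_{δ→∞} lim_{β→∞} |2b|² / (2 ‖v(β,δ)‖²) = 1, i.e. in the iterated limit β/Γ → ∞ followed by δ/Γ → ∞ the normalized post-selected two-photon state converges to the Bell state φ⁺ = (|ω_a, ω_b⟩ + |ω_b, ω_a⟩)/√2. -/

import Mathlib

open Real Filter

/-- Lorentzian coupling envelope `u_β(Δ) = √((1/π) β/(β²/4 + Δ²))`. -/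
noncomputable def lorentzEnvelope (β Δ : ℝ) : ℝ :=
  Real.sqrt ((1 / π) * (β / (β ^ 2 / 4 + Δ ^ 2)))

/-- Diagonal amplitude `a₊ = u_β(0)/(Γ/2 + 2iδ)` of the post-selected pair. -/
noncomputable def aPlus (Γ β δ : ℝ) : ℂ :=
  (lorentzEnvelope β 0 : ℂ) / ((Γ : ℂ) / 2 + 2 * Complex.I * (δ : ℂ))

/-- Diagonal amplitude `a₋ = u_β(0)/(Γ/2 − 2iδ)` of the post-selected pair. -/
noncomputable def aMinus (Γ β δ : ℝ) : ℂ :=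
  (lorentzEnvelope β 0 : ℂ) / ((Γ : ℂ) / 2 - 2 * Complex.I * (δ : ℂ))

/-- Off-diagonal amplitude `b = u_β(2δ)/(Γ/2)` of the post-selected pair. -/
noncomputable def bAmp (Γ β δ : ℝ) : ℂ :=
  (lorentzEnvelope β (2 * δ) : ℂ) / ((Γ : ℂ) / 2)

/-- The post-selected two-photon amplitude vector `v = (a₊, b, b, a₋) ∈ ℂ⁴`. -/
noncomputable def postVec (Γ β δ : ℝ) : EuclideanSpace ℂ (Fin 4) :=
  (WithLp.equiv 2 (Fin 4 → ℂ)).symm ![aPlus Γ β δ, bAmp Γ β δ, bAmp Γ β δ, aMinus Γ β δ]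

set_option maxHeartbeats 1000000 in
lemma key_ratio (Γ β δ p : ℝ) (hΓ : 0 < Γ) (hβ : 0 < β) (hδ : 0 < δ) (hp : 0 < p) :
    (2:ℝ)^2 * ((1/p) * (β/(β^2/4 + (2*δ)^2)) / (Γ/2)^2) /
      (2 * ((1/p) * (β/(β^2/4)) / ((Γ/2)^2 + (2*δ)^2)
        + (1/p) * (β/(β^2/4 + (2*δ)^2)) / (Γ/2)^2
        + (1/p) * (β/(β^2/4 + (2*δ)^2)) / (Γ/2)^2
        + (1/p) * (β/(β^2/4)) / ((Γ/2)^2 + (2*δ)^2)))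
    = (1 + (1 + 16*δ^2/β^2) * ((Γ^2/4)/(Γ^2/4 + 4*δ^2)))⁻¹ := by
  have h1 : (0:ℝ) < β^2/4 + (2*δ)^2 := by positivity
  have h2 : (0:ℝ) < (Γ/2)^2 + (2*δ)^2 := by positivity
  have h3 : (0:ℝ) < Γ^2/4 + 4*δ^2 := by positivity
  rw [eq_comm, inv_eq_iff_eq_inv, eq_comm, inv_div]
  field_simp
  ring

lemma abs_aPlus_sq (Γ β δ : ℝ) :
    ‖aPlus Γ β δ‖ ^ 2 = (lorentzEnvelope β 0)^2 / ((Γ/2)^2 + (2*δ)^2) := by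
  rw [aPlus, norm_div, div_pow, Complex.sq_norm, Complex.sq_norm]
  simp [Complex.normSq_apply]
  ring_nf

lemma abs_aMinus_sq (Γ β δ : ℝ) :
    ‖aMinus Γ β δ‖ ^ 2 = (lorentzEnvelope β 0)^2 / ((Γ/2)^2 + (2*δ)^2) := by
  rw [aMinus, norm_div, div_pow, Complex.sq_norm, Complex.sq_norm]
  simp [Complex.normSq_apply]
  ring_nf

lemma abs_bAmp_sq (Γ β δ : ℝ) :
    ‖bAmp Γ β δ‖ ^ 2 = (lorentzEnvelope β (2*δ))^2 / (Γ/2)^2 := by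
  rw [bAmp, norm_div, div_pow, Complex.sq_norm, Complex.sq_norm]
  simp [Complex.normSq_apply]
  ring_nf

lemma norm_postVec_sq (Γ β δ : ℝ) :
    ‖postVec Γ β δ‖ ^ 2 = ‖aPlus Γ β δ‖ ^ 2
      + ‖bAmp Γ β δ‖ ^ 2 + ‖bAmp Γ β δ‖ ^ 2
      + ‖aMinus Γ β δ‖ ^ 2 := by
  rw [EuclideanSpace.norm_eq, Real.sq_sqrt (by positivity)]
  simp [postVec, Fin.sum_univ_four]

/-- In the iterated limit `β/Γ → ∞` followed by `δ/Γ → ∞`, the normalized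
post-selected two-photon state converges to the Bell state
`φ⁺ = (|ω_a ω_b⟩ + |ω_b ω_a⟩)/√2`:
`lim_{δ→∞} lim_{β→∞} |2b|²/(2‖v‖²) = 1`. -/
theorem postselected_state_bell_phi_plus (Γ : ℝ) (hΓ : 0 < Γ) :
    ∃ L : ℝ → ℝ,
      (∀ δ : ℝ, 0 < δ →
        Tendsto (fun β : ℝ =>
            ‖2 * bAmp Γ β δ‖ ^ 2 / (2 * ‖postVec Γ β δ‖ ^ 2))
          atTop (nhds (L δ)))
      ∧ Tendsto L atTop (nhds 1) := by
  refine ⟨fun δ => (1 + (Γ^2/4)/(Γ^2/4 + 4*δ^2))⁻¹, fun δ hδ => ?_, ?_⟩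
  · have hβlim : Tendsto (fun β : ℝ =>
        (1 + (1 + 16*δ^2/β^2) * ((Γ^2/4)/(Γ^2/4 + 4*δ^2)))⁻¹) atTop
        (nhds ((1 + (Γ^2/4)/(Γ^2/4 + 4*δ^2))⁻¹)) := by
      have h1 : Tendsto (fun β : ℝ => 16*δ^2/β^2) atTop (nhds 0) :=
        Tendsto.div_atTop tendsto_const_nhds (tendsto_pow_atTop two_ne_zero)
      have h2 : Tendsto (fun β : ℝ => 1 + (1 + 16*δ^2/β^2) * ((Γ^2/4)/(Γ^2/4 + 4*δ^2)))
          atTop (nhds (1 + (1 + 0) * ((Γ^2/4)/(Γ^2/4 + 4*δ^2)))) :=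
        ((tendsto_const_nhds.add h1).mul tendsto_const_nhds).const_add 1
      have h3 := h2.inv₀ (by positivity)
      simpa using h3
    refine Tendsto.congr' ?_ hβlim
    filter_upwards [eventually_gt_atTop 0] with β hβ
    have hπ := Real.pi_pos
    have hu0 : (lorentzEnvelope β 0)^2 = (1/π) * (β / (β^2/4)) := by
      rw [lorentzEnvelope, Real.sq_sqrt (by positivity)]
      norm_num
    have hu2 : (lorentzEnvelope β (2*δ))^2 = (1/π) * (β / (β^2/4 + (2*δ)^2)) := by
      rw [lorentzEnvelope, Real.sq_sqrt (by positivity)]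
    rw [norm_mul, mul_pow, norm_postVec_sq, abs_aPlus_sq, abs_aMinus_sq, abs_bAmp_sq,
      hu0, hu2]
    simpa using (key_ratio Γ β δ π hΓ hβ hδ hπ).symm
  · have h1 : Tendsto (fun δ : ℝ => (Γ^2/4)/(Γ^2/4 + 4*δ^2)) atTop (nhds 0) := by
      apply Tendsto.div_atTop tendsto_const_nhds
      apply tendsto_atTop_add_const_left
      exact (tendsto_pow_atTop two_ne_zero).const_mul_atTop (by norm_num)
    have h2 := (h1.const_add 1).inv₀ (by norm_num)
    simpa using h2
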